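/- Let x₀ ∈ ℝⁿ be s-sparse with support S, and let x* ∈ ℝⁿ satisfy ‖x*‖₁ ≤ ‖x₀‖₁ and x* ≠ x₀. Then ‖x*_{Sᶜ}‖₁ ≤ ‖(x* − x₀)_S‖₁, and consequently ‖x* − x₀‖₁/‖x* − x₀‖₂ ≤ √(8s). -/

import Mathlib

open Finset Real

theorem stmt_14 (n s : ℕ) (x₀ xs : Fin n → ℝ) (S : Finset (Fin n))
    (hS : ∀ i, x₀ i ≠ 0 ↔ i ∈ S) (hcard : S.card ≤ s)
    (hl1 : (∑ i, |xs i|) ≤ ∑ i, |x₀ i|) (hne : xs ≠ x₀) :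
    (∑ i ∈ Sᶜ, |xs i|) ≤ (∑ i ∈ S, |xs i - x₀ i|) ∧
    (∑ i, |xs i - x₀ i|) / Real.sqrt (∑ i, (xs i - x₀ i) ^ 2)
      ≤ Real.sqrt (8 * s) := by
  have hx0 : ∀ i ∈ Sᶜ, x₀ i = 0 := by
    intro i hi
    by_contra h
    exact (Finset.mem_compl.mp hi) ((hS i).mp h)
  -- first claim
  have hsplit : ∀ f : Fin n → ℝ, (∑ i, f i) = (∑ i ∈ S, f i) + ∑ i ∈ Sᶜ, f i := by
    intro f; rw [Finset.sum_add_sum_compl]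
  have hx0sum : (∑ i, |x₀ i|) = ∑ i ∈ S, |x₀ i| := by
    rw [hsplit (fun i => |x₀ i|)]
    have : (∑ i ∈ Sᶜ, |x₀ i|) = 0 :=
      Finset.sum_eq_zero fun i hi => by rw [hx0 i hi, abs_zero]
    simp [this]
  have htri : ∀ i ∈ S, |x₀ i| ≤ |xs i| + |xs i - x₀ i| := by
    intro i _
    have h' := abs_sub (xs i) (xs i - x₀ i)
    have he : xs i - (xs i - x₀ i) = x₀ i := by ring
    rwa [he] at h'
  have h1 : (∑ i ∈ Sᶜ, |xs i|) ≤ ∑ i ∈ S, |xs i - x₀ i| := by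
    have hxs := hsplit (fun i => |xs i|)
    have hS1 : (∑ i ∈ S, |x₀ i|) ≤ (∑ i ∈ S, |xs i|) + ∑ i ∈ S, |xs i - x₀ i| := by
      rw [← Finset.sum_add_distrib]
      exact Finset.sum_le_sum htri
    nlinarith [hl1, hx0sum, hxs]
  refine ⟨h1, ?_⟩
  -- second claim
  set h : Fin n → ℝ := fun i => xs i - x₀ i with hh
  have hcompl : (∑ i ∈ Sᶜ, |h i|) = ∑ i ∈ Sᶜ, |xs i| :=
    Finset.sum_congr rfl fun i hi => by simp [hh, hx0 i hi]
  have hl1h : (∑ i, |h i|) ≤ 2 * ∑ i ∈ S, |h i| := by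
    rw [hsplit (fun i => |h i|), hcompl]
    linarith [h1]
  have hCS : (∑ i ∈ S, |h i|) ^ 2 ≤ (S.card : ℝ) * ∑ i ∈ S, h i ^ 2 := by
    have := sq_sum_le_card_mul_sum_sq (s := S) (f := fun i => |h i|)
    simpa [sq_abs] using this
  have hsq_le : (∑ i ∈ S, h i ^ 2) ≤ ∑ i, h i ^ 2 :=
    Finset.sum_le_sum_of_subset_of_nonneg (Finset.subset_univ S)
      (fun i _ _ => sq_nonneg _)
  have hpos : 0 < ∑ i, h i ^ 2 := by
    have : ∃ i, h i ≠ 0 := by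
      by_contra hc
      push_neg at hc
      apply hne
      funext i
      have := hc i
      simp [hh] at this
      linarith
    obtain ⟨i, hi⟩ := this
    have : 0 < h i ^ 2 := by positivity
    exact this.trans_le (Finset.single_le_sum (fun j _ => sq_nonneg (h j)) (Finset.mem_univ i))
  have hsc : (S.card : ℝ) ≤ s := by exact_mod_cast hcard
  have hnorm1_sq : (∑ i, |h i|) ^ 2 ≤ 8 * s * ∑ i, h i ^ 2 := by
    have h2 : (∑ i, |h i|) ^ 2 ≤ 4 * ((∑ i ∈ S, |h i|) ^ 2) := by
      nlinarith [Finset.sum_nonneg (fun i (_ : i ∈ S) => abs_nonneg (h i)), hl1h,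
        Finset.sum_nonneg (fun i (_ : i ∈ Finset.univ) => abs_nonneg (h i))]
    nlinarith [hCS, hsq_le, hsc, hpos, Finset.sum_nonneg (fun i (_ : i ∈ S) => sq_nonneg (h i))]
  have hle : (∑ i, |h i|) ≤ Real.sqrt (8 * s) * Real.sqrt (∑ i, h i ^ 2) := by
    rw [← Real.sqrt_mul_self (Finset.sum_nonneg fun i _ => abs_nonneg (h i)) ]
    rw [← Real.sqrt_mul (by positivity)]
    apply Real.sqrt_le_sqrt
    nlinarith [hnorm1_sq]
  rw [div_le_iff₀ (Real.sqrt_pos.mpr hpos)]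
  exact hle
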